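/- (Theorem 1, Hamilton–Jacobi equation.) Let K > 0 and define w(t,S) := sup over x ∈ (-∞,0] of ( S x - (T-t) H(x) - x²/(4K) ) for t ≤ T and S ∈ ℝ. Then on the open set { (t,S) : t < T, S < λ m̄ (T-t) }, w is continuously differentiable, ∂_S w(t,S) equals the unique maximizer x*(t,S) < 0 of the supremum, and w satisfies -∂_t w(t,S) + H(∂_S w(t,S)) = 0. -/

import Mathlib

open MeasureTheory Filter Set Topology

set_option maxHeartbeats 2000000 in
/-- (Theorem 1, Hamilton–Jacobi equation.) Let `K > 0` and define
`w(t,S) := sup_{x ≤ 0} (S x - (T-t)H(x) - x²/(4K))`. On the open set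
`{(t,S) : t < T, S < λ m̄ (T-t)}`, `w` is continuously differentiable,
`∂_S w(t,S)` is the unique maximizer `x*(t,S) < 0` of the supremum, and
`-∂_t w + H(∂_S w) = 0`. -/
theorem stmt_14 (f F G H : ℝ → ℝ) (mbar lam : ℝ)
    (hf_cont : Continuous f)
    (hf_nonpos : ∀ p ≤ (0 : ℝ), f p = 0)
    (hf_pos : ∀ p : ℝ, 0 < p → 0 < f p)
    (hf_int : (∫ p in Set.Ioi (0 : ℝ), f p) = 1)
    (hf_tail : Filter.Tendsto (fun p : ℝ => p ^ 3 * f p) Filter.atTop (nhds 0))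
    (hmean_int : MeasureTheory.IntegrableOn (fun p : ℝ => p * f p) (Set.Ioi 0))
    (hmbar : mbar = ∫ p in Set.Ioi (0 : ℝ), p * f p)
    (hF : ∀ b : ℝ, F b = ∫ p in (0 : ℝ)..b, f p)
    (hG : ∀ b : ℝ, G b = ∫ p in (0 : ℝ)..b, p * f p)
    (hlam : 0 < lam)
    (hHneg : ∀ x < (0 : ℝ), H x = -(lam * x) * ∫ p in (0 : ℝ)..(-1 / x), F p)
    (hHpos : ∀ x : ℝ, 0 ≤ x → H x = lam * (1 + x * mbar))
    (K T : ℝ) (hK : 0 < K)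
    (w : ℝ → ℝ → ℝ)
    (hw : ∀ t S : ℝ, t ≤ T →
      w t S = sSup ((fun x : ℝ => S * x - (T - t) * H x - x ^ 2 / (4 * K)) '' Set.Iic 0)) :
    ContDiffOn ℝ 1 (fun q : ℝ × ℝ => w q.1 q.2)
        {q : ℝ × ℝ | q.1 < T ∧ q.2 < lam * mbar * (T - q.1)} ∧
      ∀ t S : ℝ, t < T → S < lam * mbar * (T - t) →
        ∃ wt wS : ℝ,
          HasDerivAt (fun τ : ℝ => w τ S) wt t ∧
          HasDerivAt (fun σ : ℝ => w t σ) wS S ∧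
          wS < 0 ∧
          (∀ y ∈ Set.Iic (0 : ℝ),
            S * y - (T - t) * H y - y ^ 2 / (4 * K)
              ≤ S * wS - (T - t) * H wS - wS ^ 2 / (4 * K)) ∧
          (∀ y ∈ Set.Iic (0 : ℝ),
            S * y - (T - t) * H y - y ^ 2 / (4 * K)
                = S * wS - (T - t) * H wS - wS ^ 2 / (4 * K) → y = wS) ∧
          -wt + H wS = 0 := by

  have hf_nonneg : ∀ p : ℝ, 0 ≤ f p := by
    intro p
    rcases le_or_gt p 0 with h | h
    · rw [hf_nonpos p h]
    · exact (hf_pos p h).le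
  have hpf_cont : Continuous fun p : ℝ => p * f p := continuous_id.mul hf_cont
  have hFderiv : ∀ b : ℝ, HasDerivAt F (f b) b := by
    intro b
    have h1 : HasDerivAt (fun u : ℝ => ∫ p in (0 : ℝ)..u, f p) (f b) b :=
      intervalIntegral.integral_hasDerivAt_right (hf_cont.intervalIntegrable _ _)
        (hf_cont.stronglyMeasurableAtFilter _ _) hf_cont.continuousAt
    exact h1.congr_of_eventuallyEq (Eventually.of_forall fun x => hF x)
  have hGderiv : ∀ b : ℝ, HasDerivAt G (b * f b) b := by
    intro b
    have h1 : HasDerivAt (fun u : ℝ => ∫ p in (0 : ℝ)..u, p * f p) (b * f b) b :=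
      intervalIntegral.integral_hasDerivAt_right (hpf_cont.intervalIntegrable _ _)
        (hpf_cont.stronglyMeasurableAtFilter _ _) hpf_cont.continuousAt
    exact h1.congr_of_eventuallyEq (Eventually.of_forall fun x => hG x)
  have hFcont : Continuous F := by
    rw [continuous_iff_continuousAt]; exact fun b => (hFderiv b).continuousAt
  have hGcont : Continuous G := by
    rw [continuous_iff_continuousAt]; exact fun b => (hGderiv b).continuousAt
  have hGmono : Monotone G := by
    apply monotone_of_deriv_nonneg (fun b => (hGderiv b).differentiableAt)
    intro x
    rw [(hGderiv x).deriv]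
    rcases le_or_gt x 0 with h | h
    · rw [hf_nonpos x h]; simp
    · exact mul_nonneg h.le (hf_nonneg x)
  have hFmono : Monotone F := by
    apply monotone_of_deriv_nonneg (fun b => (hFderiv b).differentiableAt)
    intro x; rw [(hFderiv x).deriv]; exact hf_nonneg x
  have hGtop : Tendsto G atTop (𝓝 mbar) := by
    rw [hmbar]
    exact (MeasureTheory.intervalIntegral_tendsto_integral_Ioi 0 hmean_int tendsto_id).congr
      (fun b => (hG b).symm)
  have hf_intOn : IntegrableOn f (Ioi (0:ℝ)) := by
    by_contra h
    rw [integral_undef h] at hf_int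
    norm_num at hf_int
  have hFtop : Tendsto F atTop (𝓝 1) := by
    rw [← hf_int]
    exact (MeasureTheory.intervalIntegral_tendsto_integral_Ioi 0 hf_intOn tendsto_id).congr
      (fun b => (hF b).symm)
  have hGle : ∀ b : ℝ, G b ≤ mbar := fun b => hGmono.ge_of_tendsto hGtop b
  have hG0 : G 0 = 0 := by rw [hG]; simp
  have hGnonneg : ∀ b : ℝ, 0 ≤ b → 0 ≤ G b := fun b hb => hG0 ▸ hGmono hb
  have hmbar_nonneg : 0 ≤ mbar := le_trans (hGnonneg 0 le_rfl) (hGle 0)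
  have hF0 : F 0 = 0 := by rw [hF]; simp

  -- integration by parts: ∫_0^b F = b F b - G b
  have hΦderiv : ∀ b : ℝ, HasDerivAt (fun u : ℝ => ∫ p in (0:ℝ)..u, F p) (F b) b := by
    intro b
    exact intervalIntegral.integral_hasDerivAt_right (hFcont.intervalIntegrable _ _)
        (hFcont.stronglyMeasurableAtFilter _ _) hFcont.continuousAt
  have hparts : ∀ b : ℝ, (∫ p in (0:ℝ)..b, F p) = b * F b - G b := by
    have hDderiv : ∀ b : ℝ, HasDerivAt
        (fun u : ℝ => u * F u - G u - ∫ p in (0:ℝ)..u, F p) 0 b := by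
      intro b
      have h := (((hasDerivAt_id b).mul (hFderiv b)).sub (hGderiv b)).sub (hΦderiv b)
      refine h.congr_deriv ?_; simp only [id]; ring
    have hconst := is_const_of_deriv_eq_zero
      (f := fun u : ℝ => u * F u - G u - ∫ p in (0:ℝ)..u, F p)
      (fun x => (hDderiv x).differentiableAt) (fun x => (hDderiv x).deriv)
    intro b
    have := hconst b 0
    simp [hF0, hG0] at this
    linarith
  have hHrep : ∀ x < (0:ℝ), H x = lam * F (-1/x) + lam * x * G (-1/x) := by
    intro x hx
    rw [hHneg x hx, hparts]
    have hx' : x ≠ 0 := ne_of_lt hx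
    field_simp
    ring
  have hH0 : H 0 = lam := by have := hHpos 0 le_rfl; simpa using this
  -- derivative of H on negatives
  have hneg_inv_deriv : ∀ x : ℝ, x < 0 → HasDerivAt (fun y : ℝ => -1/y) (1/x^2) x := by
    intro x hx
    have h := (hasDerivAt_inv (ne_of_lt hx)).neg
    have : (fun y : ℝ => -1/y) = fun y : ℝ => -(y⁻¹) := by funext y; rw [neg_div, one_div]
    rw [this]
    refine h.congr_deriv ?_
    simp
  have hHderiv : ∀ x : ℝ, x < 0 → HasDerivAt H (lam * G (-1/x)) x := by
    intro x hx
    have hx' : x ≠ 0 := ne_of_lt hx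
    have hu := hneg_inv_deriv x hx
    have hFc : HasDerivAt (fun y : ℝ => F (-1/y)) (f (-1/x) * (1/x^2)) x :=
      (hFderiv (-1/x)).comp x hu
    have hGc : HasDerivAt (fun y : ℝ => G (-1/y)) ((-1/x) * f (-1/x) * (1/x^2)) x :=
      (hGderiv (-1/x)).comp x hu
    have h2 : HasDerivAt (fun y : ℝ => lam * F (-1/y) + lam * y * G (-1/y))
        (lam * (f (-1/x) * (1/x^2)) +
          ((lam * 1) * G (-1/x) + (lam * x) * ((-1/x) * f (-1/x) * (1/x^2)))) x := by
      exact (hFc.const_mul lam).add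
        ((((hasDerivAt_id x).const_mul lam).mul hGc))
    have h3 : HasDerivAt (fun y : ℝ => lam * F (-1/y) + lam * y * G (-1/y))
        (lam * G (-1/x)) x := by
      convert h2 using 1
      field_simp
      ring
    apply h3.congr_of_eventuallyEq
    filter_upwards [Iio_mem_nhds hx] with y hy
    exact hHrep y hy
  -- limits as x → 0⁻
  have hneginv_top : Tendsto (fun x : ℝ => -1/x) (𝓝[<] (0:ℝ)) atTop := by
    have h1 : Tendsto (fun x : ℝ => -x) (𝓝[<] (0:ℝ)) (𝓝[>] (0:ℝ)) := by
      apply tendsto_nhdsWithin_of_tendsto_nhds_of_eventually_within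
      · simpa using (continuous_neg.tendsto (0:ℝ)).mono_left nhdsWithin_le_nhds
      · filter_upwards [self_mem_nhdsWithin] with x (hx : x < 0)
        simpa using hx
    have h2 := tendsto_inv_nhdsGT_zero.comp h1
    refine h2.congr fun x => ?_
    simp [Function.comp, neg_div, one_div, inv_neg]
  have hHcont0 : ContinuousWithinAt H (Iic (0:ℝ)) 0 := by
    have hIio : Tendsto H (𝓝[<] (0:ℝ)) (𝓝 lam) := by
      have hFlim : Tendsto (fun x : ℝ => F (-1/x)) (𝓝[<] (0:ℝ)) (𝓝 1) :=
        hFtop.comp hneginv_top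
      have hGlim : Tendsto (fun x : ℝ => G (-1/x)) (𝓝[<] (0:ℝ)) (𝓝 mbar) :=
        hGtop.comp hneginv_top
      have hxlim : Tendsto (fun x : ℝ => x) (𝓝[<] (0:ℝ)) (𝓝 0) :=
        tendsto_id.mono_left nhdsWithin_le_nhds
      have hmain : Tendsto (fun x : ℝ => lam * F (-1/x) + lam * x * G (-1/x))
          (𝓝[<] (0:ℝ)) (𝓝 (lam * 1 + lam * 0 * mbar)) :=
        ((hFlim.const_mul lam).add (((hxlim.const_mul lam)).mul hGlim))
      have : lam * 1 + lam * 0 * mbar = lam := by ring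
      rw [this] at hmain
      apply hmain.congr'
      filter_upwards [self_mem_nhdsWithin] with x (hx : x < 0)
      exact (hHrep x hx).symm
    rw [ContinuousWithinAt, hH0]
    have : 𝓝[Iic (0:ℝ)] (0:ℝ) = 𝓝[<] (0:ℝ) ⊔ 𝓝[{0}] (0:ℝ) := by
      rw [← nhdsWithin_union]
      congr 1
      ext y; simp [le_iff_lt_or_eq]
    rw [this, tendsto_sup]
    constructor
    · exact hIio
    · rw [nhdsWithin_singleton]
      have := tendsto_pure_nhds H 0
      rwa [hH0] at this

  obtain ⟨U, hUdef⟩ : ∃ U : Set (ℝ × ℝ),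
      U = {q : ℝ × ℝ | q.1 < T ∧ q.2 < lam * mbar * (T - q.1)} := ⟨_, rfl⟩
  obtain ⟨ψ, hψdef⟩ : ∃ ψ : ℝ × ℝ → ℝ → ℝ,
      ψ = fun (q : ℝ × ℝ) (x : ℝ) => q.2 - (T - q.1) * (lam * G (-1/x)) - x/(2*K) := ⟨_, rfl⟩
  have hinvmono : ∀ x y : ℝ, x < y → y < 0 → -1/x < -1/y := by
    intro x y hxy hy
    have hx : x < 0 := hxy.trans hy
    have e : ∀ z : ℝ, z < 0 → -1/z = (-z)⁻¹ := by
      intro z _; rw [inv_neg, neg_div, one_div]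
    rw [e x hx, e y hy]
    exact (inv_strictAnti₀ (by linarith) (by linarith))
  have hinvneg_pos : ∀ x : ℝ, x < 0 → 0 < -1/x := by
    intro x hx
    rw [neg_div, neg_pos]
    exact one_div_neg.2 hx
  have hψanti : ∀ q : ℝ × ℝ, q.1 ≤ T → StrictAntiOn (ψ q) (Iio 0) := by
    intro q hq x hx y hy hxy
    simp only [mem_Iio] at hx hy
    have h1 : -1/x < -1/y := hinvmono x y hxy hy
    have h2 : G (-1/x) ≤ G (-1/y) := hGmono h1.le
    have h3 : (T - q.1) * (lam * G (-1/x)) ≤ (T - q.1) * (lam * G (-1/y)) := by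
      apply mul_le_mul_of_nonneg_left _ (by linarith)
      exact mul_le_mul_of_nonneg_left h2 hlam.le
    have h4 : x/(2*K) < y/(2*K) := by
      apply div_lt_div_of_pos_right hxy (by positivity)
    simp only [hψdef]
    linarith
  have hψcont : ∀ q : ℝ × ℝ, ContinuousOn (ψ q) (Iio 0) := by
    intro q
    rw [hψdef]
    have h1 : ContinuousOn (fun x : ℝ => -1/x) (Iio 0) :=
      continuousOn_const.div continuousOn_id (fun x hx => ne_of_lt hx)
    have h2 : ContinuousOn (fun x : ℝ => G (-1/x)) (Iio 0) :=
      hGcont.comp_continuousOn h1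
    exact (continuousOn_const.sub (continuousOn_const.mul (h2.const_smul lam))).sub
      (continuousOn_id.div_const _)
  have hψlim : ∀ q : ℝ × ℝ, Tendsto (ψ q) (𝓝[<] (0:ℝ))
      (𝓝 (q.2 - (T - q.1) * (lam * mbar) - 0)) := by
    intro q
    rw [hψdef]
    have hGlim : Tendsto (fun x : ℝ => G (-1/x)) (𝓝[<] (0:ℝ)) (𝓝 mbar) :=
      hGtop.comp hneginv_top
    have hxlim : Tendsto (fun x : ℝ => x/(2*K)) (𝓝[<] (0:ℝ)) (𝓝 0) := by
      have := ((tendsto_id.mono_left nhdsWithin_le_nhds :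
        Tendsto (fun x : ℝ => x) (𝓝[<] (0:ℝ)) (𝓝 0))).div_const (2*K)
      simpa using this
    exact (tendsto_const_nhds.sub ((hGlim.const_mul lam).const_mul (T - q.1))).sub hxlim
  have hroot : ∀ q : ℝ × ℝ, q ∈ U → ∃ x : ℝ, x < 0 ∧ ψ q x = 0 := by
    intro q hq
    rw [hUdef] at hq
    obtain ⟨hq1, hq2⟩ := hq
    have hq2' : q.2 < (T - q.1) * (lam * mbar) := by
      have : lam * mbar * (T - q.1) = (T - q.1) * (lam * mbar) := by ring
      linarith [this ▸ hq2]
    have hev : ∀ᶠ x in 𝓝[<] (0:ℝ), ψ q x < 0 := by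
      apply (hψlim q).eventually_lt_const
      linarith
    set c : ℝ := 1 + |q.2| + (T - q.1) * (lam * mbar) with hc
    have hcpos : 0 < c := by
      have h1 : 0 ≤ (T - q.1) * (lam * mbar) := by
        apply mul_nonneg (by linarith) (by positivity)
      have := abs_nonneg q.2
      linarith
    set x₁ : ℝ := -(2*K) * c with hx₁
    have hx₁neg : x₁ < 0 := by
      simp only [hx₁]; nlinarith
    obtain ⟨x₀, hx₀lt, hx₀mem⟩ : ∃ x₀ : ℝ, ψ q x₀ < 0 ∧ x₀ ∈ Ioo x₁ (0:ℝ) := by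
      exact (hev.and (eventually_of_mem (Ioo_mem_nhdsLT hx₁neg) fun x hx => hx)).exists
    have hx₀neg : x₀ < 0 := hx₀mem.2
    have hψx₁ : 0 < ψ q x₁ := by
      have hdiv : x₁/(2*K) = -c := by
        rw [hx₁]; field_simp
      have hGb : G (-1/x₁) ≤ mbar := hGle _
      have hGb0 : 0 ≤ G (-1/x₁) := hGnonneg _ (hinvneg_pos x₁ hx₁neg).le
      have hTt : 0 ≤ T - q.1 := by linarith
      have h5 : (T - q.1) * (lam * G (-1/x₁)) ≤ (T - q.1) * (lam * mbar) := by
        apply mul_le_mul_of_nonneg_left _ hTt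
        exact mul_le_mul_of_nonneg_left hGb hlam.le
      simp only [hψdef, hdiv, hc]
      have := neg_abs_le q.2
      linarith
    have hcont : ContinuousOn (ψ q) (Icc x₁ x₀) := by
      apply (hψcont q).mono
      intro x hx
      exact lt_of_le_of_lt hx.2 hx₀neg
    obtain ⟨xr, hxrmem, hxreq⟩ :=
      intermediate_value_Icc' hx₀mem.1.le hcont ⟨hx₀lt.le, hψx₁.le⟩
    exact ⟨xr, lt_of_le_of_lt hxrmem.2 hx₀neg, hxreq⟩
  have hHcontIic : ContinuousOn H (Iic 0) := by
    intro x hx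
    rcases lt_or_eq_of_le (mem_Iic.1 hx) with h | h
    · exact (hHderiv x h).continuousAt.continuousWithinAt
    · rw [h]
      exact hHcont0

  choose! xs hxs1 hxs2 using hroot
  have hU_open : IsOpen U := by
    rw [hUdef]
    have : {q : ℝ × ℝ | q.1 < T ∧ q.2 < lam * mbar * (T - q.1)} =
        {q : ℝ × ℝ | q.1 < T} ∩ {q : ℝ × ℝ | q.2 < lam * mbar * (T - q.1)} := rfl
    rw [this]
    exact (isOpen_lt continuous_fst continuous_const).inter
      (isOpen_lt continuous_snd (by fun_prop))
  have hsb : ∀ x : ℝ, x < 0 → 0 ≤ lam * G (-1/x) ∧ lam * G (-1/x) ≤ lam * mbar := by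
    intro x hx
    exact ⟨mul_nonneg hlam.le (hGnonneg _ (hinvneg_pos x hx).le),
      mul_le_mul_of_nonneg_left (hGle _) hlam.le⟩
  -- continuity of the root function
  have hxs_tendsto : ∀ q₀ ∈ U, Tendsto xs (𝓝 q₀) (𝓝 (xs q₀)) := by
    intro q₀ hq₀
    have hq₀T : q₀.1 < T := by rw [hUdef] at hq₀; exact hq₀.1
    rw [Metric.tendsto_nhds]
    intro ε hε
    set x₀ : ℝ := xs q₀ with hx₀def
    have hx₀ : x₀ < 0 := hxs1 q₀ hq₀
    set ε' : ℝ := min (ε/2) (-x₀/2) with hε'def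
    have hε' : 0 < ε' := lt_min (by linarith) (by linarith)
    set a : ℝ := x₀ - ε' with hadef
    set b : ℝ := x₀ + ε' with hbdef
    have hb_neg : b < 0 := by
      have : ε' ≤ -x₀/2 := min_le_right _ _
      simp only [hbdef]; linarith
    have ha_neg : a < 0 := by simp only [hadef]; linarith
    have hψa : 0 < ψ q₀ a := by
      have h := hψanti q₀ hq₀T.le ha_neg hx₀ (by simp only [hadef]; linarith)
      rw [hxs2 q₀ hq₀] at h
      exact h
    have hψb : ψ q₀ b < 0 := by
      have h := hψanti q₀ hq₀T.le hx₀ hb_neg (by simp only [hbdef]; linarith)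
      rw [hxs2 q₀ hq₀] at h
      exact h
    set δ : ℝ := min (ψ q₀ a) (-(ψ q₀ b)) with hδdef
    have hδ : 0 < δ := lt_min hψa (by linarith)
    set δ₂ : ℝ := δ / (2 * (lam * mbar + 1)) with hδ₂def
    have hlm : 0 ≤ lam * mbar := mul_nonneg hlam.le hmbar_nonneg
    have hδ₂ : 0 < δ₂ := by apply div_pos hδ; nlinarith
    have e1 : ∀ᶠ q : ℝ × ℝ in 𝓝 q₀, |q.1 - q₀.1| < δ₂ :=
      (continuous_fst.tendsto q₀).eventually (eventually_abs_sub_lt _ hδ₂)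
    have e2 : ∀ᶠ q : ℝ × ℝ in 𝓝 q₀, |q.2 - q₀.2| < δ/2 :=
      (continuous_snd.tendsto q₀).eventually (eventually_abs_sub_lt _ (by linarith))
    filter_upwards [e1, e2, hU_open.mem_nhds hq₀] with q h1 h2 hqU
    have hqT : q.1 < T := by rw [hUdef] at hqU; exact hqU.1
    have hshift : ∀ x : ℝ, x < 0 → |ψ q x - ψ q₀ x| < δ := by
      intro x hx
      have hid : ψ q x - ψ q₀ x = (q.2 - q₀.2) + (q.1 - q₀.1) * (lam * G (-1/x)) := by
        simp only [hψdef]; ring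
      rw [hid]
      have hb1 : |(q.1 - q₀.1) * (lam * G (-1/x))| ≤ |q.1 - q₀.1| * (lam * mbar) := by
        rw [abs_mul]
        apply mul_le_mul_of_nonneg_left _ (abs_nonneg _)
        rw [abs_of_nonneg (hsb x hx).1]
        exact (hsb x hx).2
      have hb2 : |q.1 - q₀.1| * (lam * mbar) < δ/2 := by
        have : |q.1 - q₀.1| * (lam * mbar) ≤ δ₂ * (lam * mbar) :=
          mul_le_mul_of_nonneg_right h1.le hlm
        have h3 : δ₂ * (lam * mbar) < δ/2 := by
          rw [hδ₂def]
          rw [div_mul_eq_mul_div, div_lt_div_iff₀ (by nlinarith) (by norm_num)]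
          nlinarith
        linarith
      calc |(q.2 - q₀.2) + (q.1 - q₀.1) * (lam * G (-1/x))|
          ≤ |q.2 - q₀.2| + |(q.1 - q₀.1) * (lam * G (-1/x))| := abs_add_le _ _
        _ < δ/2 + δ/2 := by
            apply add_lt_add_of_lt_of_le h2 (le_trans hb1 hb2.le)
        _ = δ := by ring
    have hψqa : 0 < ψ q a := by
      have := hshift a ha_neg
      have hδa : δ ≤ ψ q₀ a := min_le_left _ _
      have := abs_lt.1 this
      linarith
    have hψqb : ψ q b < 0 := by
      have := hshift b hb_neg
      have hδb : δ ≤ -(ψ q₀ b) := min_le_right _ _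
      have := abs_lt.1 this
      linarith
    have hxq : xs q < 0 := hxs1 q hqU
    have hxqr : ψ q (xs q) = 0 := hxs2 q hqU
    have hgt : a < xs q := by
      by_contra hle
      push_neg at hle
      rcases lt_or_eq_of_le hle with h | h
      · have := hψanti q hqT.le hxq ha_neg h
        rw [hxqr] at this
        linarith
      · rw [← h] at hψqa; rw [hxqr] at hψqa; linarith
    have hlt : xs q < b := by
      by_contra hle
      push_neg at hle
      rcases lt_or_eq_of_le hle with h | h
      · have := hψanti q hqT.le hb_neg hxq h
        rw [hxqr] at this
        linarith
      · rw [h] at hψqb; rw [hxqr] at hψqb; linarith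
    rw [Real.dist_eq, abs_lt]
    have : ε' ≤ ε/2 := min_le_left _ _
    constructor
    · simp only [hadef] at hgt; linarith
    · simp only [hbdef] at hlt; linarith
  -- derivative of the objective
  have hK0 : (K:ℝ) ≠ 0 := ne_of_gt hK
  have hφderiv : ∀ (q : ℝ × ℝ) (x : ℝ), x < 0 →
      HasDerivAt (fun y : ℝ => q.2 * y - (T - q.1) * H y - y ^ 2 / (4 * K)) (ψ q x) x := by
    intro q x hx
    have h : HasDerivAt (fun y : ℝ => q.2 * y - (T - q.1) * H y - y ^ 2 / (4 * K))
        (q.2 * 1 - (T - q.1) * (lam * G (-1/x)) - (↑2 * x ^ 1) / (4 * K)) x :=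
      (((hasDerivAt_id x).const_mul q.2).sub ((hHderiv x hx).const_mul (T - q.1))).sub
        ((hasDerivAt_pow 2 x).div_const (4 * K))
    convert h using 1
    rw [hψdef]
    push_cast
    field_simp
    ring
  -- strict maximizer
  have hmax : ∀ q ∈ U, ∀ y ∈ Iic (0:ℝ), y ≠ xs q →
      q.2 * y - (T - q.1) * H y - y ^ 2 / (4 * K)
        < q.2 * xs q - (T - q.1) * H (xs q) - (xs q) ^ 2 / (4 * K) := by
    intro q hq y hy hne
    have hqT : q.1 < T := by rw [hUdef] at hq; exact hq.1
    have hxq : xs q < 0 := hxs1 q hq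
    set φq : ℝ → ℝ := fun y => q.2 * y - (T - q.1) * H y - y ^ 2 / (4 * K) with hφq
    have hcont : ContinuousOn φq (Iic 0) := by
      apply ContinuousOn.sub
      apply ContinuousOn.sub
      · exact continuousOn_const.mul continuousOn_id
      · exact continuousOn_const.mul hHcontIic
      · exact (continuousOn_id.pow 2).div_const _
    have hmono : StrictMonoOn φq (Iic (xs q)) := by
      apply strictMonoOn_of_deriv_pos (convex_Iic _)
        (hcont.mono (fun z hz => le_trans hz hxq.le))
      intro x hx
      rw [interior_Iic] at hx
      have hx0 : x < 0 := lt_trans hx hxq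
      rw [(hφderiv q x hx0).deriv]
      have h := hψanti q hqT.le (mem_Iio.2 hx0) (mem_Iio.2 hxq) hx
      rw [hxs2 q hq] at h
      exact h
    have hanti : StrictAntiOn φq (Icc (xs q) 0) := by
      apply strictAntiOn_of_deriv_neg (convex_Icc _ _) (hcont.mono (fun z hz => hz.2))
      intro x hx
      rw [interior_Icc] at hx
      rw [(hφderiv q x hx.2).deriv]
      have h := hψanti q hqT.le (mem_Iio.2 hxq) (mem_Iio.2 hx.2) hx.1
      rw [hxs2 q hq] at h
      exact h
    rcases lt_or_gt_of_ne hne with h | h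
    · exact hmono (mem_Iic.2 h.le) (mem_Iic.2 le_rfl) h
    · exact hanti (mem_Icc.2 ⟨le_rfl, hxq.le⟩) (mem_Icc.2 ⟨h.le, hy⟩) h
  have hub : ∀ q ∈ U, ∀ y ∈ Iic (0:ℝ),
      q.2 * y - (T - q.1) * H y - y ^ 2 / (4 * K)
        ≤ q.2 * xs q - (T - q.1) * H (xs q) - (xs q) ^ 2 / (4 * K) := by
    intro q hq y hy
    by_cases hne : y = xs q
    · rw [hne]
    · exact (hmax q hq y hy hne).le
  have hwval : ∀ q : ℝ × ℝ, q ∈ U →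
      w q.1 q.2 = q.2 * xs q - (T - q.1) * H (xs q) - (xs q) ^ 2 / (4 * K) := by
    intro q hq
    have hqT : q.1 < T := by rw [hUdef] at hq; exact hq.1
    rw [hw q.1 q.2 hqT.le]
    apply IsGreatest.csSup_eq
    constructor
    · exact ⟨xs q, (hxs1 q hq).le, rfl⟩
    · rintro v ⟨y, hy, rfl⟩
      exact hub q hq y hy
  -- the derivative candidate
  set L : ℝ × ℝ → (ℝ × ℝ →L[ℝ] ℝ) := fun q =>
    H (xs q) • (ContinuousLinearMap.fst ℝ ℝ ℝ) + xs q • (ContinuousLinearMap.snd ℝ ℝ ℝ)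
    with hL
  have hLapply : ∀ (q : ℝ × ℝ) (v : ℝ × ℝ), L q v = v.1 * H (xs q) + v.2 * xs q := by
    intro q v
    simp [hL, mul_comm]
  have hfder : ∀ q₀ ∈ U, HasFDerivAt (fun q : ℝ × ℝ => w q.1 q.2) (L q₀) q₀ := by
    intro q₀ hq₀
    have hx₀ : xs q₀ < 0 := hxs1 q₀ hq₀
    rw [hasFDerivAt_iff_isLittleO_nhds_zero, Asymptotics.isLittleO_iff]
    intro c hc
    have hHc : ContinuousAt H (xs q₀) := (hHderiv _ hx₀).continuousAt
    obtain ⟨ε₁, hε₁, hHball⟩ := Metric.continuousAt_iff.1 hHc (c/2) (by linarith)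
    have ht : Tendsto (fun h : ℝ × ℝ => q₀ + h) (𝓝 0) (𝓝 q₀) := by
      have h0 : Continuous (fun h : ℝ × ℝ => q₀ + h) := continuous_const.add continuous_id
      have h1 := h0.tendsto (0 : ℝ × ℝ)
      simpa using h1
    have e1 : ∀ᶠ h : ℝ × ℝ in 𝓝 0, q₀ + h ∈ U := ht.eventually (hU_open.mem_nhds hq₀)
    have e2 : ∀ᶠ h : ℝ × ℝ in 𝓝 0, |xs (q₀ + h) - xs q₀| < min ε₁ (c/2) := by
      have h1 := (hxs_tendsto q₀ hq₀).comp ht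
      rw [Metric.tendsto_nhds] at h1
      refine (h1 (min ε₁ (c/2)) (lt_min hε₁ (by linarith))).mono fun h hh => ?_
      rwa [Function.comp, Real.dist_eq] at hh
    filter_upwards [e1, e2] with h hU1 hxe
    set x₀ : ℝ := xs q₀ with hx₀def
    set xq : ℝ := xs (q₀ + h) with hxqdef
    have hxqneg : xq < 0 := hxs1 _ hU1
    have hfst : (q₀ + h).1 = q₀.1 + h.1 := rfl
    have hsnd : (q₀ + h).2 = q₀.2 + h.2 := rfl
    have hA : (q₀ + h).2 * x₀ - (T - (q₀ + h).1) * H x₀ - x₀ ^ 2 / (4 * K)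
        ≤ w (q₀ + h).1 (q₀ + h).2 := by
      rw [hwval _ hU1]
      exact hub _ hU1 x₀ (mem_Iic.2 hx₀.le)
    have hB : q₀.2 * xq - (T - q₀.1) * H xq - xq ^ 2 / (4 * K) ≤ w q₀.1 q₀.2 := by
      rw [hwval q₀ hq₀]
      exact hub q₀ hq₀ xq (mem_Iic.2 hxqneg.le)
    have hexpA : (q₀ + h).2 * x₀ - (T - (q₀ + h).1) * H x₀ - x₀ ^ 2 / (4 * K)
        = (q₀.2 * x₀ - (T - q₀.1) * H x₀ - x₀ ^ 2 / (4 * K)) + (h.1 * H x₀ + h.2 * x₀) := by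
      rw [hfst, hsnd]; ring
    have hexpB : w (q₀ + h).1 (q₀ + h).2
        = (q₀.2 * xq - (T - q₀.1) * H xq - xq ^ 2 / (4 * K)) + (h.1 * H xq + h.2 * xq) := by
      rw [hwval _ hU1, hfst, hsnd]; ring
    have key1 : w q₀.1 q₀.2 + (h.1 * H x₀ + h.2 * x₀) ≤ w (q₀ + h).1 (q₀ + h).2 := by
      rw [hwval q₀ hq₀]
      rw [hexpA] at hA
      linarith
    have key2 : w (q₀ + h).1 (q₀ + h).2 ≤ w q₀.1 q₀.2 + (h.1 * H xq + h.2 * xq) := by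
      rw [hexpB]
      linarith
    rw [hLapply, Real.norm_eq_abs]
    set err : ℝ := w (q₀ + h).1 (q₀ + h).2 - w q₀.1 q₀.2 - (h.1 * H x₀ + h.2 * x₀) with herrdef
    have herr0 : 0 ≤ err := by rw [herrdef]; linarith
    have herrA : err ≤ h.1 * (H xq - H x₀) + h.2 * (xq - x₀) := by
      rw [herrdef]
      nlinarith [key2]
    have hd2 : |xq - x₀| ≤ c/2 := (lt_of_lt_of_le hxe (min_le_right _ _)).le
    have hd1 : |H xq - H x₀| ≤ c/2 := by
      have hin : dist xq x₀ < ε₁ := by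
        rw [Real.dist_eq]; exact lt_of_lt_of_le hxe (min_le_left _ _)
      have := hHball hin
      rw [Real.dist_eq] at this
      exact this.le
    have h1n : |h.1| ≤ ‖h‖ := by
      have := norm_fst_le h; rwa [Real.norm_eq_abs] at this
    have h2n : |h.2| ≤ ‖h‖ := by
      have := norm_snd_le h; rwa [Real.norm_eq_abs] at this
    have habs : |err| ≤ |h.1| * |H xq - H x₀| + |h.2| * |xq - x₀| := by
      rw [abs_of_nonneg herr0]
      calc err ≤ h.1 * (H xq - H x₀) + h.2 * (xq - x₀) := herrA
        _ ≤ |h.1 * (H xq - H x₀)| + |h.2 * (xq - x₀)| :=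
            add_le_add (le_abs_self _) (le_abs_self _)
        _ = |h.1| * |H xq - H x₀| + |h.2| * |xq - x₀| := by rw [abs_mul, abs_mul]
    have t1 : |h.1| * |H xq - H x₀| ≤ ‖h‖ * (c/2) :=
      mul_le_mul h1n hd1 (abs_nonneg _) (norm_nonneg _)
    have t2 : |h.2| * |xq - x₀| ≤ ‖h‖ * (c/2) :=
      mul_le_mul h2n hd2 (abs_nonneg _) (norm_nonneg _)
    calc |err| ≤ ‖h‖ * (c/2) + ‖h‖ * (c/2) := by linarith
      _ = c * ‖h‖ := by ring
  constructor
  · rw [← hUdef]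
    rw [show (1 : WithTop ℕ∞) = 0 + 1 from rfl, contDiffOn_succ_iff_fderiv_of_isOpen hU_open]
    refine ⟨fun q hq => (hfder q hq).differentiableAt.differentiableWithinAt, by simp, ?_⟩
    rw [contDiffOn_zero]
    have hLcont : ContinuousOn L U := by
      rw [hL]
      apply ContinuousOn.add
      · apply ContinuousOn.fun_smul _ continuousOn_const
        intro q hq
        exact ((hHderiv _ (hxs1 q hq)).continuousAt.comp
          (show ContinuousAt xs q from hxs_tendsto q hq)).continuousWithinAt
      · apply ContinuousOn.fun_smul _ continuousOn_const
        intro q hq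
        exact (show ContinuousAt xs q from hxs_tendsto q hq).continuousWithinAt
    exact hLcont.congr (fun q hq => (hfder q hq).fderiv)
  · intro t S ht hS
    have hqU : ((t, S) : ℝ × ℝ) ∈ U := by rw [hUdef]; exact ⟨ht, hS⟩
    refine ⟨H (xs (t, S)), xs (t, S), ?_, ?_, hxs1 _ hqU, ?_, ?_, by ring⟩
    · have hline : HasDerivAt (fun τ : ℝ => ((τ, S) : ℝ × ℝ)) ((1 : ℝ), (0 : ℝ)) t :=
        HasDerivAt.prodMk (hasDerivAt_id t) (hasDerivAt_const t S)
      have h := (hfder (t, S) hqU).comp_hasDerivAt t hline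
      have hval : L (t, S) (1, 0) = H (xs (t, S)) := by rw [hLapply]; simp
      rw [hval] at h
      exact h
    · have hline : HasDerivAt (fun σ : ℝ => ((t, σ) : ℝ × ℝ)) ((0 : ℝ), (1 : ℝ)) S :=
        HasDerivAt.prodMk (hasDerivAt_const S t) (hasDerivAt_id S)
      have h := (hfder (t, S) hqU).comp_hasDerivAt S hline
      have hval : L (t, S) (0, 1) = xs (t, S) := by rw [hLapply]; simp
      rw [hval] at h
      exact h
    · intro y hy
      exact hub (t, S) hqU y hy
    · intro y hy heq
      by_contra hne
      exact absurd heq (ne_of_lt (hmax (t, S) hqU y hy hne))
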